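/- Under the stated assumptions, for every x ∈ ℝ and η ∈ (0,1], the bias of the kernel occupation-density estimator satisfies |E(f̂_η(x)) − f(x)|² ≤ M_{f'}² η² ∫_{−∞}^{∞} y² K(y) dy. -/

import Mathlib

open MeasureTheory
open scoped NNReal ENNReal

/-- The rescaled kernel `K_η(x) = η⁻¹ K(x/η)`. -/
noncomputable def Kh (K : ℝ → ℝ) (η x : ℝ) : ℝ := η⁻¹ * K (x / η)

/-- The kernel occupation-density estimator
`f̂_η(x) = (1/(N T₀)) ∑_{i=1}^N ∫_{t₀}^T K_η(Xⁱ_s - x) ds`. -/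
noncomputable def densEst {Ω : Type*} (K : ℝ → ℝ) (t₀ T η : ℝ) (N : ℕ)
    (X : Fin N → ℝ → Ω → ℝ) (x : ℝ) (ω : Ω) : ℝ :=
  (1 / (N * (T - t₀))) * ∑ i, ∫ s in t₀..T, Kh K η (X i s ω - x)

lemma kcs {K : ℝ → ℝ} (hKsupp : ∀ y, 1 < |y| → K y = 0) : HasCompactSupport K := by
  apply HasCompactSupport.intro (isCompact_Icc (a := (-1:ℝ)) (b := 1))
  intro y hy
  apply hKsupp
  simp only [Set.mem_Icc, not_and_or, not_le] at hy
  rcases hy with h | h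
  · rw [abs_of_neg (by linarith)]; linarith
  · rw [abs_of_pos (by linarith)]; linarith

lemma varlem {K : ℝ → ℝ} (hKc : Continuous K) (hcs : HasCompactSupport K)
    (hK0 : ∀ y, 0 ≤ K y) (hKint : ∫ y, K y = 1) :
    (∫ y, |y| * K y) ^ 2 ≤ ∫ y, y ^ 2 * K y := by
  set A := ∫ y, |y| * K y with hA
  have i0 : Integrable K := hKc.integrable_of_hasCompactSupport hcs
  have i1 : Integrable (fun y => |y| * K y) :=
    (continuous_abs.mul hKc).integrable_of_hasCompactSupport (hcs.mul_left)
  have i2 : Integrable (fun y => y ^ 2 * K y) :=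
    ((continuous_pow 2).mul hKc).integrable_of_hasCompactSupport (hcs.mul_left)
  have h0 : 0 ≤ ∫ y, (|y| - A) ^ 2 * K y :=
    integral_nonneg fun y => mul_nonneg (sq_nonneg _) (hK0 y)
  have hexp : ∀ y : ℝ, (|y| - A) ^ 2 * K y
      = y ^ 2 * K y - (2 * A) * (|y| * K y) + A ^ 2 * K y := by
    intro y
    linear_combination K y * sq_abs y
  have : ∫ y, (|y| - A) ^ 2 * K y
      = (∫ y, y ^ 2 * K y) - (2 * A) * A + A ^ 2 * 1 := by
    simp_rw [hexp]
    have e1 : Integrable (fun y => y ^ 2 * K y - 2 * A * (|y| * K y)) volume :=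
      i2.sub (i1.const_mul (2*A))
    rw [integral_add e1 (i0.const_mul (A^2)),
      integral_sub i2 (i1.const_mul (2*A)), integral_const_mul, integral_const_mul, hKint, ← hA]
  nlinarith [h0, this]

/-- Expectation of the rescaled kernel against a density. -/
lemma kern_exp {K : ℝ → ℝ} (hKc : Continuous K)
    {Ω : Type} [MeasurableSpace Ω] (P : Measure Ω) [IsProbabilityMeasure P]
    {Xs : Ω → ℝ} (hXs : Measurable Xs) {g : ℝ → ℝ} (hg : Measurable g) (hg0 : ∀ y, 0 ≤ g y)
    (hd : Measure.map Xs P = volume.withDensity (fun y => ENNReal.ofReal (g y)))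
    (x η : ℝ) (hη0 : 0 < η) :
    ∫ ω, Kh K η (Xs ω - x) ∂P = ∫ z, K z * g (x + η * z) := by
  have hKhc : Continuous (fun y : ℝ => Kh K η (y - x)) := by
    unfold Kh; fun_prop
  have h1 : ∫ ω, Kh K η (Xs ω - x) ∂P = ∫ y, Kh K η (y - x) ∂(Measure.map Xs P) :=
    (integral_map hXs.aemeasurable hKhc.aestronglyMeasurable).symm
  rw [h1, hd]
  have h2 : ∫ y, Kh K η (y - x)
        ∂(volume.withDensity (fun y => ENNReal.ofReal (g y)))
      = ∫ y, g y * Kh K η (y - x) := by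
    have : (fun y => ENNReal.ofReal (g y))
        = (fun y => (((fun y => (g y).toNNReal) y : ℝ≥0) : ℝ≥0∞)) := rfl
    rw [this, integral_withDensity_eq_integral_smul hg.real_toNNReal]
    congr 1; funext y
    rw [NNReal.smul_def, Real.coe_toNNReal _ (hg0 y), smul_eq_mul]
  rw [h2]
  set G : ℝ → ℝ := fun z => K z * g (x + η * z) with hG
  have hηne : η ≠ 0 := ne_of_gt hη0
  have key : ∀ y : ℝ, g y * Kh K η (y - x) = η⁻¹ * G ((y - x) / η) := by
    intro y
    simp only [hG, Kh]
    have : x + η * ((y - x) / η) = y := by field_simp; ring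
    rw [this]; ring
  simp_rw [key]
  rw [MeasureTheory.integral_const_mul,
    MeasureTheory.integral_sub_right_eq_self (fun u => G (u / η)) x,
    MeasureTheory.Measure.integral_comp_div G η]
  simp [abs_of_pos hη0, smul_eq_mul, ← mul_assoc, inv_mul_cancel₀ hηne]

/-- Bias bound for the kernel occupation-density estimator. -/
theorem stmt12 (t₀ T : ℝ) (ht₀ : 0 < t₀) (htT : t₀ < T)
    -- kernel assumptions
    (K : ℝ → ℝ) (hK0 : ∀ y, 0 ≤ K y) (hK2 : ContDiff ℝ 2 K) (hKsymm : ∀ y, K (-y) = K y)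
    (hKsupp : ∀ y, 1 < |y| → K y = 0) (hKint : ∫ y, K y = 1)
    -- the probability space and the `N` copies of the process
    (Ω : Type) [MeasurableSpace Ω] (P : Measure Ω) [IsProbabilityMeasure P]
    (N : ℕ) (hN : 0 < N) (X : Fin N → ℝ → Ω → ℝ)
    (hXmeas : ∀ i, Measurable (Function.uncurry (X i)))
    -- the marginal densities `f_s` and their properties
    (fs fs' : ℝ → ℝ → ℝ) (hfsmeas : Measurable (Function.uncurry fs))
    (hfs0 : ∀ s y, 0 ≤ fs s y)
    (hdens : ∀ i, ∀ s ∈ Set.Icc t₀ T,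
      Measure.map (X i s) P = volume.withDensity (fun y => ENNReal.ofReal (fs s y)))
    (Mf Mf' : ℝ) (hMf : ∀ s ∈ Set.Icc t₀ T, ∀ y, fs s y ≤ Mf)
    (hfs'd : ∀ s ∈ Set.Icc t₀ T, ∀ y, HasDerivAt (fs s) (fs' s y) y)
    (hMf' : ∀ s ∈ Set.Icc t₀ T, ∀ y, |fs' s y| ≤ Mf')
    -- the point and the bandwidth
    (x η : ℝ) (hη0 : 0 < η) (hη1 : η ≤ 1) :
    |(∫ ω, densEst K t₀ T η N X x ω ∂P) - (1 / (T - t₀)) * ∫ s in t₀..T, fs s x| ^ 2 ≤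
      Mf' ^ 2 * η ^ 2 * ∫ y, y ^ 2 * K y := by
  have hT₀ : 0 < T - t₀ := sub_pos.2 htT
  have hKc : Continuous K := hK2.continuous
  have hcs : HasCompactSupport K := kcs hKsupp
  have iK : Integrable K := hKc.integrable_of_hasCompactSupport hcs
  have iA : Integrable (fun z => |z| * K z) :=
    (continuous_abs.mul hKc).integrable_of_hasCompactSupport (hcs.mul_left)
  set A := ∫ z, |z| * K z with hAdef
  have hA0 : 0 ≤ A := integral_nonneg fun z => mul_nonneg (abs_nonneg _) (hK0 z)
  obtain ⟨C, hC0⟩ := hKc.bounded_above_of_compact_support hcs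
  have hC : ∀ u, K u ≤ C := fun u => by
    have := hC0 u; rwa [Real.norm_eq_abs, abs_of_nonneg (hK0 u)] at this
  have hKhbd : ∀ u, |Kh K η u| ≤ η⁻¹ * C := by
    intro u
    rw [Kh, abs_mul, abs_of_pos (inv_pos.2 hη0), abs_of_nonneg (hK0 _)]
    exact mul_le_mul_of_nonneg_left (hC _) (le_of_lt (inv_pos.2 hη0))
  set μ := volume.restrict (Set.Ioc t₀ T) with hμ
  haveI : IsFiniteMeasure μ := ⟨by
    rw [hμ, Measure.restrict_apply_univ]; exact measure_Ioc_lt_top⟩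
  have hXsec : ∀ i (s : ℝ), Measurable (X i s) :=
    fun i s => (hXmeas i).comp measurable_prodMk_left
  have hfssec : ∀ s : ℝ, Measurable (fs s) :=
    fun s => hfsmeas.comp measurable_prodMk_left
  have hfscont : ∀ s ∈ Set.Icc t₀ T, Continuous (fs s) := fun s hs =>
    continuous_iff_continuousAt.2 fun y => (hfs'd s hs y).continuousAt
  set I : ℝ → ℝ := fun s => ∫ z, K z * fs s (x + η * z) with hIdef
  have hA : ∀ (i : Fin N), ∀ s ∈ Set.Icc t₀ T,
      ∫ ω, Kh K η (X i s ω - x) ∂P = I s := fun i s hs =>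
    kern_exp hKc P (hXsec i s) (hfssec s) (hfs0 s) (hdens i s hs) x η hη0
  -- integrability on the product space
  have hgmeas : ∀ i, Measurable (fun p : ℝ × Ω => Kh K η (X i p.1 p.2 - x)) := by
    intro i
    have hKhc : Continuous (Kh K η) := by unfold Kh; fun_prop
    exact hKhc.measurable.comp ((hXmeas i).sub measurable_const)
  have hgint : ∀ i, Integrable (fun p : ℝ × Ω => Kh K η (X i p.1 p.2 - x)) (μ.prod P) := by
    intro i
    apply Integrable.mono' (integrable_const (η⁻¹ * C)) (hgmeas i).aestronglyMeasurable
    exact Filter.Eventually.of_forall fun p => hKhbd _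
  -- expectation computation
  have hIoc : Set.Ioc t₀ T ⊆ Set.Icc t₀ T := Set.Ioc_subset_Icc_self
  have hEi : ∀ i : Fin N, ∫ ω, (∫ s, Kh K η (X i s ω - x) ∂μ) ∂P = ∫ s, I s ∂μ := by
    intro i
    have hswap : Integrable (Function.uncurry fun ω s => Kh K η (X i s ω - x)) (P.prod μ) :=
      (hgint i).swap
    rw [MeasureTheory.integral_integral_swap hswap]
    exact setIntegral_congr_fun measurableSet_Ioc fun s hs => hA i s (hIoc hs)
  have hFint : ∀ i : Fin N, Integrable (fun ω => ∫ s, Kh K η (X i s ω - x) ∂μ) P := by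
    intro i
    exact (Integrable.swap (hgint i)).integral_prod_left
  set J := ∫ s, I s ∂μ with hJdef
  have hE : ∫ ω, densEst K t₀ T η N X x ω ∂P = (1 / (T - t₀)) * J := by
    unfold densEst
    simp_rw [intervalIntegral.integral_of_le htT.le, ← hμ]
    rw [MeasureTheory.integral_const_mul, integral_finset_sum _ (fun i _ => hFint i)]
    have : ∀ i ∈ Finset.univ, (∫ ω, (∫ s, Kh K η (X i s ω - x) ∂μ) ∂P) = J :=
      fun i _ => hEi i
    rw [Finset.sum_congr rfl this, Finset.sum_const, Finset.card_univ, Fintype.card_fin,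
      nsmul_eq_mul]
    have hNne : (N : ℝ) ≠ 0 := Nat.cast_ne_zero.2 hN.ne'
    field_simp
  -- integrability of I and of s ↦ fs s x on μ
  have iI : Integrable I μ := by
    have i0 : Fin N := ⟨0, hN⟩
    have h1 : Integrable (fun s => ∫ ω, Kh K η (X i0 s ω - x) ∂P) μ :=
      (hgint i0).integral_prod_left
    apply h1.congr
    filter_upwards [ae_restrict_mem measurableSet_Ioc] with s hs
    exact hA i0 s (hIoc hs)
  have ifsx : Integrable (fun s => fs s x) μ := by
    have hm : Measurable (fun s => fs s x) :=
      hfsmeas.comp (measurable_id.prodMk measurable_const)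
    apply Integrable.mono' (integrable_const Mf) hm.aestronglyMeasurable
    filter_upwards [ae_restrict_mem measurableSet_Ioc] with s hs
    rw [Real.norm_eq_abs, abs_of_nonneg (hfs0 s x)]
    exact hMf s (hIoc hs) x
  -- pointwise bias bound
  have hbias : ∀ s ∈ Set.Icc t₀ T, |I s - fs s x| ≤ Mf' * η * A := by
    intro s hs
    have hc : Continuous (fs s) := hfscont s hs
    have int1 : Integrable (fun z => K z * fs s (x + η * z)) := by
      apply (hKc.mul (hc.comp (by fun_prop))).integrable_of_hasCompactSupport hcs.mul_right
    have int2 : Integrable (fun z => K z * fs s x) := iK.mul_const _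
    have hfx : fs s x = ∫ z, K z * fs s x := by
      rw [integral_mul_const, hKint, one_mul]
    have hmvt : ∀ b : ℝ, |fs s b - fs s x| ≤ Mf' * |b - x| := by
      intro b
      have := Convex.norm_image_sub_le_of_norm_hasDerivWithin_le
        (f := fs s) (f' := fs' s) (s := Set.univ) (C := Mf')
        (fun y _ => (hfs'd s hs y).hasDerivWithinAt)
        (fun y _ => hMf' s hs y) convex_univ (Set.mem_univ x) (Set.mem_univ b)
      simpa [Real.norm_eq_abs] using this
    have hdiff : I s - fs s x = ∫ z, K z * (fs s (x + η * z) - fs s x) := by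
      have heq : (∫ z, K z * (fs s (x + η * z) - fs s x))
          = (∫ z, K z * fs s (x + η * z)) - ∫ z, K z * fs s x := by
        rw [← integral_sub int1 int2]
        congr 1; funext z; ring
      rw [heq, ← hfx]
    rw [hdiff]
    have hle : ∀ z : ℝ, ‖K z * (fs s (x + η * z) - fs s x)‖ ≤ (Mf' * η) * (|z| * K z) := by
      intro z
      rw [Real.norm_eq_abs, abs_mul, abs_of_nonneg (hK0 z)]
      have h1 : |fs s (x + η * z) - fs s x| ≤ Mf' * (η * |z|) := by
        have := hmvt (x + η * z)
        simpa [abs_mul, abs_of_pos hη0, mul_assoc] using this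
      calc K z * |fs s (x + η * z) - fs s x| ≤ K z * (Mf' * (η * |z|)) :=
            mul_le_mul_of_nonneg_left h1 (hK0 z)
        _ = (Mf' * η) * (|z| * K z) := by ring
    have := norm_integral_le_of_norm_le ((iA.const_mul (Mf' * η))) (Filter.Eventually.of_forall hle)
    rw [Real.norm_eq_abs] at this
    calc |∫ z, K z * (fs s (x + η * z) - fs s x)| ≤ ∫ z, (Mf' * η) * (|z| * K z) := this
      _ = Mf' * η * A := by rw [integral_const_mul, hAdef]
  -- bound the integrated bias
  set B := ∫ s, fs s x ∂μ with hBdef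
  have hJB : |J - B| ≤ (Mf' * η * A) * (T - t₀) := by
    have hsub : J - B = ∫ s, (I s - fs s x) ∂μ := (integral_sub iI ifsx).symm
    rw [hsub]
    have h := norm_setIntegral_le_of_norm_le_const (μ := volume) (s := Set.Ioc t₀ T)
      (C := Mf' * η * A) (by exact measure_Ioc_lt_top)
      (fun s hs => by rw [Real.norm_eq_abs]; exact hbias s (hIoc hs))
    rw [Real.norm_eq_abs] at h
    calc |∫ s, (I s - fs s x) ∂μ| ≤ (Mf' * η * A) * (volume (Set.Ioc t₀ T)).toReal := h
      _ = (Mf' * η * A) * (T - t₀) := by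
          rw [Real.volume_Ioc, ENNReal.toReal_ofReal hT₀.le]
  -- conclude
  have hMf'0 : 0 ≤ Mf' := le_trans (abs_nonneg _) (hMf' t₀ ⟨le_refl _, htT.le⟩ 0)
  rw [hE, intervalIntegral.integral_of_le htT.le, ← hμ, ← hBdef]
  have hstep : |1 / (T - t₀) * J - 1 / (T - t₀) * B| ≤ Mf' * η * A := by
    rw [← mul_sub, abs_mul, abs_of_pos (by positivity : (0:ℝ) < 1 / (T - t₀))]
    calc 1 / (T - t₀) * |J - B| ≤ 1 / (T - t₀) * ((Mf' * η * A) * (T - t₀)) :=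
          mul_le_mul_of_nonneg_left hJB (by positivity)
      _ = Mf' * η * A := by field_simp
  have hsq : |1 / (T - t₀) * J - 1 / (T - t₀) * B| ^ 2 ≤ (Mf' * η * A) ^ 2 :=
    pow_le_pow_left₀ (abs_nonneg _) hstep 2
  calc |1 / (T - t₀) * J - 1 / (T - t₀) * B| ^ 2 ≤ (Mf' * η * A) ^ 2 := hsq
    _ = (Mf' ^ 2 * η ^ 2) * A ^ 2 := by ring
    _ ≤ (Mf' ^ 2 * η ^ 2) * ∫ z, z ^ 2 * K z := by
        apply mul_le_mul_of_nonneg_left (varlem hKc hcs hK0 hKint) (by positivity)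
    _ = Mf' ^ 2 * η ^ 2 * ∫ y, y ^ 2 * K y := rfl
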